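/- For t-intersecting families of large size, the ℓ-th shadow ratio strictly exceeds Katona's bound for ℓ < t: for integers 1 ≤ ℓ ≤ t < k, one has C(t,ℓ) ≥ C(2k−t, k−ℓ)/C(2k−t, k), with equality if and only if ℓ = t. -/

import Mathlib

open Finset

/-- Termwise inequality: for `i < ℓ ≤ t ≤ k`, `(ℓ-i)(k-i) ≤ (t-i)(k-t+ℓ-i)`. -/
lemma term_le (k t ℓ i : ℕ) (hiℓ : i < ℓ) (hℓt : ℓ ≤ t) (htk : t ≤ k) :
    (ℓ - i) * (k - i) ≤ (t - i) * (k - t + ℓ - i) := by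
  have h1 : t - i = (ℓ - i) + (t - ℓ) := by omega
  have h2 : k - i = (k - t + ℓ - i) + (t - ℓ) := by omega
  have h3 : ℓ - i ≤ k - t + ℓ - i := by omega
  rw [h1, h2]
  nlinarith [Nat.mul_le_mul_right (t - ℓ) h3]

/-- Product form: `ℓ! * k^{(ℓ)} ≤ t^{(ℓ)} * (k-t+ℓ)^{(ℓ)}` (descending factorials). -/
lemma df_le (k t ℓ : ℕ) (hℓt : ℓ ≤ t) (htk : t ≤ k) :
    ℓ.descFactorial ℓ * k.descFactorial ℓ
      ≤ t.descFactorial ℓ * (k - t + ℓ).descFactorial ℓ := by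
  rw [Nat.descFactorial_eq_prod_range, Nat.descFactorial_eq_prod_range,
    Nat.descFactorial_eq_prod_range, Nat.descFactorial_eq_prod_range,
    ← Finset.prod_mul_distrib, ← Finset.prod_mul_distrib]
  refine Finset.prod_le_prod (fun i _ => Nat.zero_le _) (fun i hi => ?_)
  exact term_le k t ℓ i (Finset.mem_range.1 hi) hℓt htk

lemma df_lt (k t ℓ : ℕ) (hℓ1 : 1 ≤ ℓ) (hℓt : ℓ < t) (htk : t < k) :
    ℓ.descFactorial ℓ * k.descFactorial ℓ
      < t.descFactorial ℓ * (k - t + ℓ).descFactorial ℓ := by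
  rw [Nat.descFactorial_eq_prod_range, Nat.descFactorial_eq_prod_range,
    Nat.descFactorial_eq_prod_range, Nat.descFactorial_eq_prod_range,
    ← Finset.prod_mul_distrib, ← Finset.prod_mul_distrib]
  refine Finset.prod_lt_prod (fun i hi => ?_) (fun i hi => term_le k t ℓ i
    (Finset.mem_range.1 hi) (le_of_lt hℓt) (le_of_lt htk)) ⟨0, ?_, ?_⟩
  · have hi := Finset.mem_range.1 hi
    have : 0 < ℓ - i := by omega
    have : 0 < k - i := by omega
    positivity
  · exact Finset.mem_range.2 hℓ1
  · simp only [Nat.sub_zero]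
    have h1 : ℓ * k + (t - ℓ) * (k - t) ≤ t * (k - t + ℓ) := by
      have e1 : t = ℓ + (t - ℓ) := by omega
      have e2 : k = (k - t) + t := by omega
      nlinarith [e1, e2]
    have h2 : 0 < (t - ℓ) * (k - t) := by
      apply Nat.mul_pos <;> omega
    omega

/-- Key choose inequality. -/
lemma choose_key_le (k t ℓ : ℕ) (hℓt : ℓ ≤ t) (htk : t ≤ k) :
    k.choose ℓ ≤ t.choose ℓ * (k - t + ℓ).choose ℓ := by
  have hpos : 0 < ℓ.factorial * ℓ.factorial := Nat.mul_pos ℓ.factorial_pos ℓ.factorial_pos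
  refine Nat.le_of_mul_le_mul_left ?_ hpos
  have h := df_le k t ℓ hℓt htk
  rw [Nat.descFactorial_self, Nat.descFactorial_eq_factorial_mul_choose,
    Nat.descFactorial_eq_factorial_mul_choose,
    Nat.descFactorial_eq_factorial_mul_choose] at h
  calc ℓ.factorial * ℓ.factorial * k.choose ℓ
      = ℓ.factorial * (ℓ.factorial * k.choose ℓ) := by ring
    _ ≤ ℓ.factorial * t.choose ℓ * (ℓ.factorial * (k - t + ℓ).choose ℓ) := h
    _ = ℓ.factorial * ℓ.factorial * (t.choose ℓ * (k - t + ℓ).choose ℓ) := by ring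

lemma choose_key_lt (k t ℓ : ℕ) (hℓ1 : 1 ≤ ℓ) (hℓt : ℓ < t) (htk : t < k) :
    k.choose ℓ < t.choose ℓ * (k - t + ℓ).choose ℓ := by
  have hpos : 0 < ℓ.factorial * ℓ.factorial := Nat.mul_pos ℓ.factorial_pos ℓ.factorial_pos
  have h := df_lt k t ℓ hℓ1 hℓt htk
  rw [Nat.descFactorial_self, Nat.descFactorial_eq_factorial_mul_choose,
    Nat.descFactorial_eq_factorial_mul_choose,
    Nat.descFactorial_eq_factorial_mul_choose] at h
  have h' : ℓ.factorial * ℓ.factorial * k.choose ℓ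
      < ℓ.factorial * ℓ.factorial * (t.choose ℓ * (k - t + ℓ).choose ℓ) := by
    calc ℓ.factorial * ℓ.factorial * k.choose ℓ
        = ℓ.factorial * (ℓ.factorial * k.choose ℓ) := by ring
      _ < ℓ.factorial * t.choose ℓ * (ℓ.factorial * (k - t + ℓ).choose ℓ) := h
      _ = ℓ.factorial * ℓ.factorial * (t.choose ℓ * (k - t + ℓ).choose ℓ) := by ring
  exact Nat.lt_of_mul_lt_mul_left h'

theorem stmt15 (k t ℓ : ℕ) (hℓ1 : 1 ≤ ℓ) (hℓt : ℓ ≤ t) (htk : t < k) :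
    (t.choose ℓ : ℝ) ≥ ((2 * k - t).choose (k - ℓ) : ℝ) / ((2 * k - t).choose k : ℝ) ∧
    ((t.choose ℓ : ℝ) = ((2 * k - t).choose (k - ℓ) : ℝ) / ((2 * k - t).choose k : ℝ) ↔
      ℓ = t) := by
  set n := 2 * k - t with hn
  have hkn : k ≤ n := by omega
  have hnkpos : 0 < n.choose k := Nat.choose_pos hkn
  have hnkpos' : (0 : ℝ) < (n.choose k : ℝ) := by exact_mod_cast hnkpos
  -- the subset-chain identity
  have hid : n.choose k * k.choose (k - ℓ) = n.choose (k - ℓ) * (k - t + ℓ).choose ℓ := by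
    have := Nat.choose_mul (n := n) (k := k) (s := k - ℓ) (Nat.sub_le _ _)
    have e1 : n - (k - ℓ) = k - t + ℓ := by omega
    have e2 : k - (k - ℓ) = ℓ := by omega
    rw [e1, e2] at this
    exact this
  have hsymm : k.choose (k - ℓ) = k.choose ℓ := Nat.choose_symm (by omega)
  rw [hsymm] at hid
  -- main nat inequality: n.choose (k-ℓ) ≤ t.choose ℓ * n.choose k
  have hCpos : 0 < (k - t + ℓ).choose ℓ := Nat.choose_pos (by omega)
  have hle : n.choose (k - ℓ) ≤ t.choose ℓ * n.choose k := by
    have h := choose_key_le k t ℓ hℓt (le_of_lt htk)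
    have : n.choose (k - ℓ) * (k - t + ℓ).choose ℓ
        ≤ t.choose ℓ * n.choose k * (k - t + ℓ).choose ℓ := by
      rw [← hid]
      calc n.choose k * k.choose ℓ ≤ n.choose k * (t.choose ℓ * (k - t + ℓ).choose ℓ) :=
            Nat.mul_le_mul_left _ h
        _ = t.choose ℓ * n.choose k * (k - t + ℓ).choose ℓ := by ring
    exact Nat.le_of_mul_le_mul_right this hCpos
  have hge : (t.choose ℓ : ℝ) ≥ (n.choose (k - ℓ) : ℝ) / (n.choose k : ℝ) := by
    rw [ge_iff_le, div_le_iff₀ hnkpos']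
    exact_mod_cast hle
  refine ⟨hge, ⟨fun heq => ?_, fun heq => ?_⟩⟩
  · by_contra hne
    have hℓt' : ℓ < t := lt_of_le_of_ne hℓt hne
    have hlt : n.choose (k - ℓ) < t.choose ℓ * n.choose k := by
      have h := choose_key_lt k t ℓ hℓ1 hℓt' htk
      have : n.choose (k - ℓ) * (k - t + ℓ).choose ℓ
          < t.choose ℓ * n.choose k * (k - t + ℓ).choose ℓ := by
        rw [← hid]
        calc n.choose k * k.choose ℓ < n.choose k * (t.choose ℓ * (k - t + ℓ).choose ℓ) :=
              Nat.mul_lt_mul_of_le_of_lt (le_refl _) h hnkpos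
          _ = t.choose ℓ * n.choose k * (k - t + ℓ).choose ℓ := by ring
      exact Nat.lt_of_mul_lt_mul_right this
    have : (n.choose (k - ℓ) : ℝ) / (n.choose k : ℝ) < (t.choose ℓ : ℝ) := by
      rw [div_lt_iff₀ hnkpos']
      exact_mod_cast hlt
    linarith [heq]
  · subst heq
    have h1 : n.choose (k - ℓ) = n.choose k := by
      have : k - ℓ = n - k := by omega
      rw [this, Nat.choose_symm hkn]
    rw [h1, Nat.choose_self, div_self (ne_of_gt hnkpos')]
    norm_num
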